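/- Let σ > 0 and l₁, l₂ > 0 with sin(σl₁) ≠ 0, sin(σl₂) ≠ 0 and cos(σl₁) ≠ ±1, cos(σl₂) ≠ ±1. Set S = diag(sin σl₁, sin σl₂), C = diag(cos σl₁, cos σl₂); let B be a real symmetric 2×2 matrix, δ ∈ ℝ², c ∈ ℝ, P = C + SB, and assume I + P is invertible. Set n = ⟨δ, (I - P²)⁻¹Sδ⟩ and m = c + ⟨δ, (I - P²)⁻¹PSδ⟩ (assuming I - P² invertible), and let T = diag(tan(σl₁/2), tan(σl₂/2)), which is invertible. If T⁻¹ + B is invertible, then m - n = c - ⟨δ, (T⁻¹ + B)⁻¹δ⟩. -/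

import Mathlib

open Matrix

lemma tan_half_mul (x : ℝ) (hc' : Real.cos x ≠ -1) :
    Real.tan (x / 2) * (1 + Real.cos x) = Real.sin x := by
  have hch : Real.cos (x / 2) ≠ 0 := by
    intro h
    apply hc'
    have := Real.cos_two_mul (x / 2)
    rw [h] at this
    simpa [show 2 * (x / 2) = x by ring] using this
  have h1 : 1 + Real.cos x = 2 * Real.cos (x / 2) ^ 2 := by
    have := Real.cos_two_mul (x / 2)
    rw [show 2 * (x / 2) = x by ring] at this
    rw [this]; ring
  have h2 : Real.sin x = 2 * Real.sin (x / 2) * Real.cos (x / 2) := by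
    have := Real.sin_two_mul (x / 2)
    rwa [show 2 * (x / 2) = x by ring] at this
  rw [Real.tan_eq_sin_div_cos, h1, h2]
  field_simp

/-- For the necklace loop quantities `m, n` one has `m - n = c - ⟨δ, (T⁻¹ + B)⁻¹δ⟩`
where `T = diag(tan(σl₁/2), tan(σl₂/2))` (which is invertible under the hypotheses). -/
theorem necklace_m_minus_n (σ l₁ l₂ : ℝ) (hσ : 0 < σ) (hl₁ : 0 < l₁) (hl₂ : 0 < l₂)
    (hs₁ : Real.sin (σ * l₁) ≠ 0) (hs₂ : Real.sin (σ * l₂) ≠ 0)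
    (hc₁ : Real.cos (σ * l₁) ≠ 1) (hc₁' : Real.cos (σ * l₁) ≠ -1)
    (hc₂ : Real.cos (σ * l₂) ≠ 1) (hc₂' : Real.cos (σ * l₂) ≠ -1)
    (S C : Matrix (Fin 2) (Fin 2) ℝ)
    (hS : S = Matrix.diagonal ![Real.sin (σ * l₁), Real.sin (σ * l₂)])
    (hC : C = Matrix.diagonal ![Real.cos (σ * l₁), Real.cos (σ * l₂)])
    (B : Matrix (Fin 2) (Fin 2) ℝ) (hB : Bᵀ = B) (δ : Fin 2 → ℝ) (c : ℝ)
    (P : Matrix (Fin 2) (Fin 2) ℝ) (hP : P = C + S * B)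
    (hIP : IsUnit (1 + P)) (hIP2 : IsUnit (1 - P ^ 2))
    (n m : ℝ)
    (hn : n = δ ⬝ᵥ ((1 - P ^ 2)⁻¹ * S).mulVec δ)
    (hm : m = c + δ ⬝ᵥ ((1 - P ^ 2)⁻¹ * (P * S)).mulVec δ)
    (T : Matrix (Fin 2) (Fin 2) ℝ)
    (hT : T = Matrix.diagonal ![Real.tan (σ * l₁ / 2), Real.tan (σ * l₂ / 2)])
    (hTB : IsUnit (T⁻¹ + B)) :
    IsUnit T ∧ m - n = c - δ ⬝ᵥ (T⁻¹ + B)⁻¹.mulVec δ := by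
  have ht₁ := tan_half_mul (σ * l₁) hc₁'
  have ht₂ := tan_half_mul (σ * l₂) hc₂'
  have hone₁ : (1 : ℝ) + Real.cos (σ * l₁) ≠ 0 := fun h => hc₁' (by linarith)
  have hone₂ : (1 : ℝ) + Real.cos (σ * l₂) ≠ 0 := fun h => hc₂' (by linarith)
  have htan₁ : Real.tan (σ * l₁ / 2) ≠ 0 := by
    intro h; rw [h, zero_mul] at ht₁; exact hs₁ ht₁.symm
  have htan₂ : Real.tan (σ * l₂ / 2) ≠ 0 := by
    intro h; rw [h, zero_mul] at ht₂; exact hs₂ ht₂.symm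
  have hTunit : IsUnit T := by
    rw [hT, Matrix.isUnit_iff_isUnit_det, Matrix.det_diagonal]
    simp [Fin.prod_univ_two, htan₁, htan₂]
  refine ⟨hTunit, ?_⟩
  have hSunit : IsUnit S := by
    rw [hS, Matrix.isUnit_iff_isUnit_det, Matrix.det_diagonal]
    simp [Fin.prod_univ_two, hs₁, hs₂]
  -- T⁻¹ as diagonal
  have hTinv : T⁻¹ = Matrix.diagonal ![(Real.tan (σ * l₁ / 2))⁻¹, (Real.tan (σ * l₂ / 2))⁻¹] := by
    apply Matrix.inv_eq_left_inv
    rw [hT, Matrix.diagonal_mul_diagonal]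
    ext i j
    fin_cases i <;> fin_cases j <;>
      simp [Matrix.diagonal, Matrix.one_apply, inv_mul_cancel₀ htan₁, inv_mul_cancel₀ htan₂, -Real.tan_inv_eq_cot]
  -- S * T⁻¹ = 1 + C
  have hv₁ : Real.sin (σ * l₁) * (Real.tan (σ * l₁ / 2))⁻¹ = 1 + Real.cos (σ * l₁) := by
    field_simp
    rw [← ht₁]
  have hv₂ : Real.sin (σ * l₂) * (Real.tan (σ * l₂ / 2))⁻¹ = 1 + Real.cos (σ * l₂) := by
    field_simp
    rw [← ht₂]
  have hST : S * T⁻¹ = 1 + C := by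
    rw [hS, hTinv, hC, Matrix.diagonal_mul_diagonal]
    ext i j
    fin_cases i <;> fin_cases j <;>
      simp [Matrix.diagonal, Matrix.one_apply, hv₁, hv₂, -Real.tan_inv_eq_cot]
  have h1P : 1 + P = S * (T⁻¹ + B) := by
    rw [hP, mul_add, hST]; abel
  have key : (1 + P)⁻¹ * S = (T⁻¹ + B)⁻¹ := by
    rw [h1P, Matrix.mul_inv_rev, mul_assoc,
      Matrix.nonsing_inv_mul S ((Matrix.isUnit_iff_isUnit_det S).mp hSunit), mul_one]
  -- factor 1 - P^2
  have hfac : 1 - P ^ 2 = (1 + P) * (1 - P) := by noncomm_ring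
  have hIPm : IsUnit (1 - P) := by
    rw [hfac, Matrix.isUnit_iff_isUnit_det, Matrix.det_mul] at hIP2
    exact (Matrix.isUnit_iff_isUnit_det _).mpr (isUnit_of_mul_isUnit_right hIP2)
  have hinvfac : (1 - P ^ 2)⁻¹ = (1 - P)⁻¹ * (1 + P)⁻¹ := by
    rw [hfac, Matrix.mul_inv_rev]
  have hmain : (1 - P ^ 2)⁻¹ * (P * S) - (1 - P ^ 2)⁻¹ * S = -((T⁻¹ + B)⁻¹) := by
    have hcomm : (1 - P ^ 2)⁻¹ = (1 + P)⁻¹ * (1 - P)⁻¹ := by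
      rw [show (1 : Matrix (Fin 2) (Fin 2) ℝ) - P ^ 2 = (1 - P) * (1 + P) by noncomm_ring,
        Matrix.mul_inv_rev]
    calc (1 - P ^ 2)⁻¹ * (P * S) - (1 - P ^ 2)⁻¹ * S
        = (1 + P)⁻¹ * ((1 - P)⁻¹ * (1 - P)) * (-(S)) + 0 := by
          rw [hcomm]; noncomm_ring
      _ = -((T⁻¹ + B)⁻¹) := by
          rw [Matrix.nonsing_inv_mul (1 - P) ((Matrix.isUnit_iff_isUnit_det _).mp hIPm),
            mul_one, add_zero, mul_neg, key]
  have : m - n = c + δ ⬝ᵥ (((1 - P ^ 2)⁻¹ * (P * S)) - ((1 - P ^ 2)⁻¹ * S)).mulVec δ := by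
    rw [hm, hn, Matrix.sub_mulVec, dotProduct_sub]; ring
  rw [this, hmain, Matrix.neg_mulVec, dotProduct_neg]
  ring
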